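/- Let α ∈ [1,2] and s ≥ 0. There is a constant C = C(α,s) > 0 such that for every λ > 0 and every u ∈ E^s, the rescaled function u_λ(x,y) = λ · u(λ^{1/α} x, λ^{1/2} y) satisfies ‖u_λ‖_{E^s} ≤ C λ^{3/4 − 1/(2α)} (1 + λ^s) ‖u‖_{E^s}. -/

import Mathlib

open MeasureTheory Set
open scoped ENNReal

noncomputable section

/-- The weight `⟨|ξ|^α + μ²⟩^s` defining the `E^s` norm on the Fourier side. -/
def wgt (α s : ℝ) (ζ : ℝ × ℝ) : ℝ := (1 + (|ζ.1| ^ α + ζ.2 ^ 2) ^ 2) ^ (s / 2)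

lemma wgt_nonneg (α s : ℝ) (ζ : ℝ × ℝ) : 0 ≤ wgt α s ζ := by
  unfold wgt; positivity

lemma wgt_scale {α s lam : ℝ} (hα : 1 ≤ α) (hs : 0 ≤ s) (hlam : 0 < lam) (ζ : ℝ × ℝ) :
    wgt α s ζ ≤ 2 ^ (s / 2) * (1 + lam ^ s) *
      wgt α s (lam ^ (-(1 / α)) * ζ.1, lam ^ (-(1:ℝ) / 2) * ζ.2) := by
  have hα0 : α ≠ 0 := by linarith
  set X : ℝ := |lam ^ (-(1 / α)) * ζ.1| ^ α + (lam ^ (-(1:ℝ) / 2) * ζ.2) ^ 2 with hXdef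
  have hX0 : 0 ≤ X := by positivity
  have h1 : |lam ^ (-(1 / α)) * ζ.1| ^ α = lam⁻¹ * |ζ.1| ^ α := by
    rw [abs_mul, abs_of_pos (Real.rpow_pos_of_pos hlam _),
      Real.mul_rpow (Real.rpow_pos_of_pos hlam _).le (abs_nonneg _),
      ← Real.rpow_mul hlam.le, show -(1 / α) * α = -1 by field_simp,
      Real.rpow_neg_one]
  have h2 : (lam ^ (-(1:ℝ) / 2) * ζ.2) ^ 2 = lam⁻¹ * ζ.2 ^ 2 := by
    rw [mul_pow, ← Real.rpow_natCast (lam ^ (-(1:ℝ)/2)) 2, ← Real.rpow_mul hlam.le,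
      show (-(1:ℝ)/2) * ((2:ℕ):ℝ) = -1 by norm_num, Real.rpow_neg_one]
  have hkey : |ζ.1| ^ α + ζ.2 ^ 2 = lam * X := by
    rw [hXdef, h1, h2]
    field_simp
  have hwz : wgt α s ζ = (1 + (lam * X) ^ 2) ^ (s / 2) := by
    unfold wgt; rw [hkey]
  have hstep : (1 + (lam * X) ^ 2) ^ (s / 2)
      ≤ ((1 + lam ^ 2) * (1 + X ^ 2)) ^ (s / 2) := by
    apply Real.rpow_le_rpow (by positivity) (by nlinarith [sq_nonneg lam, sq_nonneg X])
      (by positivity)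
  have hmul : ((1 + lam ^ 2) * (1 + X ^ 2)) ^ (s / 2)
      = (1 + lam ^ 2) ^ (s / 2) * (1 + X ^ 2) ^ (s / 2) :=
    Real.mul_rpow (by positivity) (by positivity)
  have hM : (1 + lam ^ 2) ^ (s / 2) ≤ 2 ^ (s / 2) * (1 + lam ^ s) := by
    set M : ℝ := max 1 lam with hMdef
    have hM1 : (1:ℝ) ≤ M := le_max_left _ _
    have hM0 : 0 ≤ M := by linarith
    have hle : 1 + lam ^ 2 ≤ 2 * M ^ 2 := by
      have h1 : lam ≤ M := le_max_right _ _
      nlinarith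
    have : (1 + lam ^ 2) ^ (s / 2) ≤ (2 * M ^ 2) ^ (s / 2) :=
      Real.rpow_le_rpow (by positivity) hle (by positivity)
    have hMs : (M ^ 2 : ℝ) ^ (s / 2) = M ^ s := by
      rw [← Real.rpow_natCast M 2, ← Real.rpow_mul hM0,
        show ((2:ℕ):ℝ) * (s / 2) = s by push_cast; ring]
    have hMub : M ^ s ≤ 1 + lam ^ s := by
      rcases le_total lam 1 with h | h
      · rw [hMdef, max_eq_left h, Real.one_rpow]
        have : (0:ℝ) ≤ lam ^ s := Real.rpow_nonneg hlam.le s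
        linarith
      · rw [hMdef, max_eq_right h]
        nlinarith [Real.rpow_nonneg hlam.le s]
    calc (1 + lam ^ 2) ^ (s / 2) ≤ (2 * M ^ 2) ^ (s / 2) := this
      _ = 2 ^ (s / 2) * (M ^ 2) ^ (s / 2) := Real.mul_rpow (by norm_num) (by positivity)
      _ = 2 ^ (s / 2) * M ^ s := by rw [hMs]
      _ ≤ 2 ^ (s / 2) * (1 + lam ^ s) := by
          apply mul_le_mul_of_nonneg_left hMub (by positivity)
  calc wgt α s ζ = (1 + (lam * X) ^ 2) ^ (s / 2) := hwz
    _ ≤ (1 + lam ^ 2) ^ (s / 2) * (1 + X ^ 2) ^ (s / 2) := by rw [← hmul]; exact hstep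
    _ ≤ 2 ^ (s / 2) * (1 + lam ^ s) * (1 + X ^ 2) ^ (s / 2) := by
        apply mul_le_mul_of_nonneg_right hM (by positivity)
    _ = _ := by unfold wgt; rfl

lemma smul_prod_smul {α β : Type*} [MeasurableSpace α] [MeasurableSpace β]
    (μ : Measure α) (ν : Measure β) [SFinite μ] [SFinite ν] (c d : ℝ≥0∞)
    (hd : d ≠ ⊤) :
    (c • μ).prod (d • ν) = (c * d) • (μ.prod ν) := by
  ext s hs
  rw [Measure.prod_apply hs, Measure.smul_apply, Measure.prod_apply hs,
    lintegral_smul_measure]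
  simp only [Measure.smul_apply, smul_eq_mul]
  rw [lintegral_const_mul' _ _ hd, ← mul_assoc]

lemma eLpNorm_comp_scale (h : ℝ × ℝ → ℂ) {a b : ℝ} (ha : a ≠ 0) (hb : b ≠ 0) :
    eLpNorm (fun ζ : ℝ × ℝ => h (a * ζ.1, b * ζ.2)) 2 volume
      = ENNReal.ofReal ((|a⁻¹| * |b⁻¹|) ^ ((1:ℝ)/2)) * eLpNorm h 2 volume := by
  set e : (ℝ × ℝ) ≃ᵐ (ℝ × ℝ) :=
    (Homeomorph.mulLeft₀ a ha).toMeasurableEquiv.prodCongr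
      (Homeomorph.mulLeft₀ b hb).toMeasurableEquiv with he
  have hmap : Measure.map e volume = ENNReal.ofReal (|a⁻¹| * |b⁻¹|) • volume := by
    have hcoe : (e : ℝ × ℝ → ℝ × ℝ) = Prod.map (fun x => a * x) (fun y => b * y) := rfl
    rw [hcoe, Measure.volume_eq_prod,
      ← Measure.map_prod_map _ _ (measurable_const_mul a) (measurable_const_mul b),
      Real.map_volume_mul_left ha, Real.map_volume_mul_left hb,
      smul_prod_smul _ _ _ _ ENNReal.ofReal_ne_top,
      ← ENNReal.ofReal_mul (abs_nonneg _), ← Measure.volume_eq_prod]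
  have habs : 0 < |a⁻¹| * |b⁻¹| := by positivity
  rw [eLpNorm_eq_lintegral_rpow_enorm_toReal (by norm_num) (by norm_num),
    eLpNorm_eq_lintegral_rpow_enorm_toReal (by norm_num) (by norm_num)]
  have hint : (∫⁻ ζ : ℝ × ℝ, ‖h (a * ζ.1, b * ζ.2)‖ₑ ^ (2:ℝ≥0∞).toReal ∂volume)
      = ENNReal.ofReal (|a⁻¹| * |b⁻¹|) *
        ∫⁻ ζ : ℝ × ℝ, ‖h ζ‖ₑ ^ (2:ℝ≥0∞).toReal ∂volume := by
    have h0 := lintegral_map_equiv (μ := (volume : Measure (ℝ × ℝ)))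
      (fun ζ : ℝ × ℝ => ‖h ζ‖ₑ ^ (2:ℝ≥0∞).toReal) e
    rw [hmap, lintegral_smul_measure] at h0
    exact h0.symm
  rw [hint, ENNReal.mul_rpow_of_nonneg _ _ (by positivity),
    ← ENNReal.ofReal_rpow_of_pos habs]
  norm_num

/-- `‖u_λ‖_{E^s} ≤ C λ^{3/4 - 1/(2α)} (1 + λ^s) ‖u‖_{E^s}` for
`u_λ(x,y) = λ u(λ^{1/α} x, λ^{1/2} y)`, stated on the Fourier side with `g = û`:
the Fourier transform of `u_λ` is `λ^{1 - 1/α - 1/2} ĝ(λ^{-1/α} ξ, λ^{-1/2} μ)`. -/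
theorem stmt17 (α : ℝ) (hα : α ∈ Icc (1:ℝ) 2) (s : ℝ) (hs : 0 ≤ s) :
    ∃ C > (0:ℝ), ∀ lam : ℝ, 0 < lam → ∀ g : ℝ × ℝ → ℂ,
      eLpNorm (fun ζ : ℝ × ℝ =>
          ((wgt α s ζ : ℝ) : ℂ) * ((lam ^ (1 - 1 / α - 1 / 2) : ℝ) : ℂ) *
            g (lam ^ (-(1 / α)) * ζ.1, lam ^ (-(1:ℝ) / 2) * ζ.2)) 2 volume
        ≤ ENNReal.ofReal (C * lam ^ ((3:ℝ) / 4 - 1 / (2 * α)) * (1 + lam ^ s)) *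
          eLpNorm (fun ζ : ℝ × ℝ => ((wgt α s ζ : ℝ) : ℂ) * g ζ) 2 volume := by
  obtain ⟨hα1, hα2⟩ := hα
  have hα0 : α ≠ 0 := by linarith
  refine ⟨2 ^ (s / 2), by positivity, ?_⟩
  intro lam hlam g
  set a : ℝ := lam ^ (-(1 / α)) with ha
  set b : ℝ := lam ^ (-(1:ℝ) / 2) with hb
  have ha0 : a ≠ 0 := (Real.rpow_pos_of_pos hlam _).ne'
  have hb0 : b ≠ 0 := (Real.rpow_pos_of_pos hlam _).ne'
  set c : ℝ := lam ^ (1 - 1 / α - 1 / 2) with hc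
  have hc0 : 0 < c := Real.rpow_pos_of_pos hlam _
  have hlams : (0:ℝ) ≤ lam ^ s := Real.rpow_nonneg hlam.le s
  set D : ℝ := 2 ^ (s / 2) * (1 + lam ^ s) * c with hD
  have hD0 : 0 ≤ D := by positivity
  set h : ℝ × ℝ → ℂ := fun ζ => ((wgt α s ζ : ℝ) : ℂ) * g ζ with hh
  have step1 : eLpNorm (fun ζ : ℝ × ℝ =>
        ((wgt α s ζ : ℝ) : ℂ) * ((c : ℝ) : ℂ) * g (a * ζ.1, b * ζ.2)) 2 volume
      ≤ eLpNorm (fun ζ : ℝ × ℝ => (D : ℂ) • h (a * ζ.1, b * ζ.2)) 2 volume := by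
    apply eLpNorm_mono
    intro ζ
    simp only [hh, smul_eq_mul, norm_mul, Complex.norm_real, Real.norm_eq_abs]
    rw [abs_of_nonneg (wgt_nonneg α s ζ), abs_of_nonneg hc0.le, abs_of_nonneg hD0,
      abs_of_nonneg (wgt_nonneg α s _)]
    have hw := wgt_scale hα1 hs hlam ζ
    rw [← ha, ← hb] at hw
    have hgn : (0:ℝ) ≤ ‖g (a * ζ.1, b * ζ.2)‖ := norm_nonneg _
    calc wgt α s ζ * c * ‖g (a * ζ.1, b * ζ.2)‖
        ≤ (2 ^ (s / 2) * (1 + lam ^ s) * wgt α s (a * ζ.1, b * ζ.2)) * c *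
            ‖g (a * ζ.1, b * ζ.2)‖ := by
          apply mul_le_mul_of_nonneg_right (mul_le_mul_of_nonneg_right hw hc0.le) hgn
      _ = D * (wgt α s (a * ζ.1, b * ζ.2) * ‖g (a * ζ.1, b * ζ.2)‖) := by
          rw [hD]; ring
  have step2 : eLpNorm (fun ζ : ℝ × ℝ => (D : ℂ) • h (a * ζ.1, b * ζ.2)) 2 volume
      = ENNReal.ofReal D * eLpNorm (fun ζ : ℝ × ℝ => h (a * ζ.1, b * ζ.2)) 2 volume := by
    rw [show (fun ζ : ℝ × ℝ => (D : ℂ) • h (a * ζ.1, b * ζ.2))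
        = (D : ℂ) • (fun ζ : ℝ × ℝ => h (a * ζ.1, b * ζ.2)) from rfl,
      eLpNorm_const_smul]
    congr 1
    rw [← ofReal_norm]
    simp [Complex.norm_real, Real.norm_eq_abs, abs_of_nonneg hD0]
  have step3 := eLpNorm_comp_scale h ha0 hb0
  have hainv : |a⁻¹| = lam ^ ((1:ℝ) / α) := by
    rw [ha, show -(1/α) = -((1:ℝ)/α) by ring, Real.rpow_neg hlam.le, inv_inv,
      abs_of_pos (Real.rpow_pos_of_pos hlam _)]
  have hbinv : |b⁻¹| = lam ^ ((1:ℝ) / 2) := by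
    rw [hb, show (-(1:ℝ))/2 = -((1:ℝ)/2) by ring, Real.rpow_neg hlam.le, inv_inv,
      abs_of_pos (Real.rpow_pos_of_pos hlam _)]
  have hprod : (|a⁻¹| * |b⁻¹|) ^ ((1:ℝ)/2) = lam ^ ((1:ℝ)/(2*α) + 1/4) := by
    rw [hainv, hbinv, ← Real.rpow_add hlam, ← Real.rpow_mul hlam.le]
    congr 1
    field_simp
    ring
  have hcpow : c * lam ^ ((1:ℝ)/(2*α) + 1/4) = lam ^ ((3:ℝ)/4 - 1/(2*α)) := by
    rw [hc, ← Real.rpow_add hlam]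
    congr 1
    field_simp
    ring
  have hfinal : D * ((|a⁻¹| * |b⁻¹|) ^ ((1:ℝ)/2))
      = 2 ^ (s / 2) * lam ^ ((3:ℝ)/4 - 1/(2*α)) * (1 + lam ^ s) := by
    rw [hprod, hD]
    calc 2 ^ (s / 2) * (1 + lam ^ s) * c * lam ^ ((1:ℝ)/(2*α) + 1/4)
        = 2 ^ (s / 2) * (1 + lam ^ s) * (c * lam ^ ((1:ℝ)/(2*α) + 1/4)) := by ring
      _ = _ := by rw [hcpow]; ring
  calc eLpNorm (fun ζ : ℝ × ℝ =>
        ((wgt α s ζ : ℝ) : ℂ) * ((c : ℝ) : ℂ) * g (a * ζ.1, b * ζ.2)) 2 volume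
      ≤ eLpNorm (fun ζ : ℝ × ℝ => (D : ℂ) • h (a * ζ.1, b * ζ.2)) 2 volume := step1
    _ = ENNReal.ofReal D * eLpNorm (fun ζ : ℝ × ℝ => h (a * ζ.1, b * ζ.2)) 2 volume := step2
    _ = ENNReal.ofReal D * (ENNReal.ofReal ((|a⁻¹| * |b⁻¹|) ^ ((1:ℝ)/2)) *
          eLpNorm h 2 volume) := by rw [step3]
    _ = ENNReal.ofReal (D * ((|a⁻¹| * |b⁻¹|) ^ ((1:ℝ)/2))) * eLpNorm h 2 volume := by
          rw [ENNReal.ofReal_mul hD0, mul_assoc]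
    _ = ENNReal.ofReal (2 ^ (s / 2) * lam ^ ((3:ℝ)/4 - 1/(2*α)) * (1 + lam ^ s)) *
          eLpNorm h 2 volume := by rw [hfinal]
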